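/- Let T > 0 and c > 0. Let G : ℝ → ℝ be continuous, nonnegative and T-periodic, and let h : ℝ → ℝ be nonnegative, T-periodic and integrable on [0, T]. Assume that for all real s ≤ t one has G(t) ≤ G(s) + ∫ₛᵗ (2√(G(τ)) h(τ) − 2c G(τ)) dτ. Then for every t ∈ ℝ, √(G(t)) ≤ (1 + 1/(cT)) ∫₀ᵀ h(τ) dτ. -/

import Mathlib

open MeasureTheory

open Set in
private lemma fubini_triangle {a b : ℝ} {f g : ℝ → ℝ}
    (hf : IntegrableOn f (Set.Ioc a b)) (hg : IntegrableOn g (Set.Ioc a b)) :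
    ∫ τ in Set.Ioc a b, (∫ σ in Set.Ioc a τ, g σ) * f τ
      = ∫ σ in Set.Ioc a b, (∫ τ in Set.Ioc σ b, f τ) * g σ := by
  set ν : Measure ℝ := volume.restrict (Set.Ioc a b) with hν
  haveI : IsFiniteMeasure ν := by
    constructor
    rw [hν, Measure.restrict_apply_univ]
    exact measure_Ioc_lt_top
  set F : ℝ × ℝ → ℝ := {p : ℝ × ℝ | p.2 ≤ p.1}.indicator (fun p => g p.2 * f p.1) with hF
  have hprod : Integrable (fun p : ℝ × ℝ => g p.2 * f p.1) (ν.prod ν) := by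
    have := (Integrable.mul_prod (μ := ν) (ν := ν) hf hg)
    simpa [mul_comm] using this
  have hFint : Integrable F (ν.prod ν) :=
    hprod.indicator (measurableSet_le measurable_snd measurable_fst)
  have swap := MeasureTheory.integral_integral_swap (f := fun τ σ => F (τ, σ)) (μ := ν) (ν := ν)
    (by exact hFint)
  have hL : ∀ τ ∈ Set.Ioc a b, (∫ σ, F (τ, σ) ∂ν) = (∫ σ in Set.Ioc a τ, g σ) * f τ := by
    intro τ hτ
    have h1 : (fun σ => F (τ, σ)) = (Set.Iic τ).indicator (fun σ => g σ * f τ) := by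
      funext σ
      simp [hF, Set.indicator_apply]
    rw [h1, integral_indicator measurableSet_Iic, hν, Measure.restrict_restrict measurableSet_Iic]
    have hset : Set.Iic τ ∩ Set.Ioc a b = Set.Ioc a τ := by
      ext x
      simp only [Set.mem_inter_iff, Set.mem_Iic, Set.mem_Ioc]
      exact ⟨fun ⟨h1, h2, _⟩ => ⟨h2, h1⟩, fun ⟨h1, h2⟩ => ⟨h2, h1, h2.trans hτ.2⟩⟩
    rw [hset, integral_mul_const]
  have hR : ∀ σ ∈ Set.Ioc a b, (∫ τ, F (τ, σ) ∂ν) = (∫ τ in Set.Ioc σ b, f τ) * g σ := by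
    intro σ hσ
    have h1 : (fun τ => F (τ, σ)) = (Set.Ici σ).indicator (fun τ => g σ * f τ) := by
      funext τ
      simp [hF, Set.indicator_apply]
    rw [h1, integral_indicator measurableSet_Ici, hν, Measure.restrict_restrict measurableSet_Ici]
    have hset : Set.Ici σ ∩ Set.Ioc a b = Set.Icc σ b := by
      ext x
      simp only [Set.mem_inter_iff, Set.mem_Ici, Set.mem_Ioc, Set.mem_Icc]
      exact ⟨fun ⟨h1, _, h3⟩ => ⟨h1, h3⟩, fun ⟨h1, h2⟩ => ⟨h1, hσ.1.trans_le h1, h2⟩⟩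
    rw [hset, integral_Icc_eq_integral_Ioc, MeasureTheory.integral_const_mul, mul_comm]
  calc ∫ τ in Set.Ioc a b, (∫ σ in Set.Ioc a τ, g σ) * f τ
      = ∫ τ, (∫ σ, F (τ, σ) ∂ν) ∂ν := by
        rw [hν]
        exact (setIntegral_congr_fun measurableSet_Ioc (fun τ hτ => (hL τ hτ))).symm
    _ = ∫ σ, (∫ τ, F (τ, σ) ∂ν) ∂ν := swap
    _ = ∫ σ in Set.Ioc a b, (∫ τ in Set.Ioc σ b, f τ) * g σ := by
        rw [hν]
        exact setIntegral_congr_fun measurableSet_Ioc (fun σ hσ => (hR σ hσ))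

private lemma fubini_triangle' {a b : ℝ} (hab : a ≤ b) {f g : ℝ → ℝ}
    (hf : IntervalIntegrable f volume a b) (hg : IntervalIntegrable g volume a b) :
    ∫ τ in a..b, (∫ σ in a..τ, g σ) * f τ = ∫ σ in a..b, (∫ τ in σ..b, f τ) * g σ := by
  have e1 : ∫ τ in a..b, (∫ σ in a..τ, g σ) * f τ
      = ∫ τ in Set.Ioc a b, (∫ σ in Set.Ioc a τ, g σ) * f τ := by
    rw [intervalIntegral.integral_of_le hab]
    exact setIntegral_congr_fun measurableSet_Ioc
      (fun τ hτ => by rw [intervalIntegral.integral_of_le hτ.1.le])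
  have e2 : ∫ σ in a..b, (∫ τ in σ..b, f τ) * g σ
      = ∫ σ in Set.Ioc a b, (∫ τ in Set.Ioc σ b, f τ) * g σ := by
    rw [intervalIntegral.integral_of_le hab]
    exact setIntegral_congr_fun measurableSet_Ioc
      (fun σ hσ => by rw [intervalIntegral.integral_of_le hσ.2])
  rw [e1, e2]
  exact fubini_triangle hf.1 hg.1

private lemma primitive_sq (k : ℝ → ℝ) (hk : ∀ a b, IntervalIntegrable k volume a b)
    (A s : ℝ) {a b : ℝ} (hab : a ≤ b) :
    ∫ τ in a..b, (A + ∫ x in s..τ, k x) * k τ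
      = ((A + ∫ x in s..b, k x) ^ 2 - (A + ∫ x in s..a, k x) ^ 2) / 2 := by
  set P : ℝ → ℝ := fun τ => ∫ x in a..τ, k x with hPdef
  have hPc : Continuous P := intervalIntegral.continuous_primitive hk a
  have hθ : ∀ τ, (A + ∫ x in s..τ, k x) = (A + ∫ x in s..a, k x) + P τ := by
    intro τ
    have := intervalIntegral.integral_add_adjacent_intervals (hk s a) (hk a τ)
    simp only [hPdef]
    rw [← this]; ring
  set B := A + ∫ x in s..a, k x with hBdef
  have iPk : IntervalIntegrable (fun τ => P τ * k τ) volume a b :=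
    (hk a b).continuousOn_mul hPc.continuousOn
  have iBk : IntervalIntegrable (fun τ => B * k τ) volume a b := (hk a b).const_mul B
  have hPa : P a = 0 := intervalIntegral.integral_same
  have hsplit : ∀ σ, (∫ τ in σ..b, k τ) = P b - P σ := by
    intro σ
    have := intervalIntegral.integral_add_adjacent_intervals (hk a σ) (hk σ b)
    simp only [hPdef]; rw [← this]; ring
  have hPk : ∫ τ in a..b, P τ * k τ = P b ^ 2 / 2 := by
    have hFT := fubini_triangle' hab (hk a b) (hk a b)
    have e2 : ∫ σ in a..b, (∫ τ in σ..b, k τ) * k σ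
        = ∫ σ in a..b, (P b * k σ - P σ * k σ) := by
      apply intervalIntegral.integral_congr
      intro σ _
      beta_reduce
      rw [hsplit σ]; ring
    rw [e2, intervalIntegral.integral_sub ((hk a b).const_mul (P b)) iPk,
      intervalIntegral.integral_const_mul] at hFT
    have : (∫ x in a..b, k x) = P b := rfl
    rw [this] at hFT
    linarith
  calc ∫ τ in a..b, (A + ∫ x in s..τ, k x) * k τ
      = ∫ τ in a..b, (B * k τ + P τ * k τ) := by
        apply intervalIntegral.integral_congr
        intro τ _
        beta_reduce
        rw [hθ τ]; ring
    _ = B * P b + P b ^ 2 / 2 := by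
        rw [intervalIntegral.integral_add iBk iPk, intervalIntegral.integral_const_mul, hPk]
    _ = ((A + ∫ x in s..b, k x) ^ 2 - (A + ∫ x in s..a, k x) ^ 2) / 2 := by
        rw [hθ b, hθ a, hPa]; ring

private lemma weighted_primitive_sq (k : ℝ → ℝ) (hk : ∀ a b, IntervalIntegrable k volume a b)
    (c A s : ℝ) {a b : ℝ} (hab : a ≤ b) :
    Real.exp (-(2*c*b)) * (A + ∫ x in s..b, k x) ^ 2
      - Real.exp (-(2*c*a)) * (A + ∫ x in s..a, k x) ^ 2
      = ∫ τ in a..b, (2 * Real.exp (-(2*c*τ)) * (A + ∫ x in s..τ, k x) * k τ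
          - 2 * c * Real.exp (-(2*c*τ)) * (A + ∫ x in s..τ, k x) ^ 2) := by
  set θ : ℝ → ℝ := fun τ => A + ∫ x in s..τ, k x with hθdef
  have hθc : Continuous θ := continuous_const.add (intervalIntegral.continuous_primitive hk s)
  have hβc : Continuous (fun σ : ℝ => Real.exp (-(2*c*σ))) :=
    Real.continuous_exp.comp ((continuous_const.mul continuous_id).neg)
  have hθk : IntervalIntegrable (fun τ => θ τ * k τ) volume a b :=
    (hk a b).continuousOn_mul hθc.continuousOn
  have hβθk : IntervalIntegrable (fun τ => Real.exp (-(2*c*τ)) * (θ τ * k τ)) volume a b := by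
    have h0 : IntervalIntegrable (fun τ => Real.exp (-(2*c*τ)) * θ τ * k τ) volume a b :=
      (hk a b).continuousOn_mul (hβc.mul hθc).continuousOn
    simpa only [mul_assoc] using h0
  have hexp : ∀ x : ℝ, HasDerivAt (fun σ : ℝ => -Real.exp (-(2*c*σ)))
      (2*c*Real.exp (-(2*c*x))) x := by
    intro x
    have h1 : HasDerivAt (fun σ : ℝ => -(2*c*σ)) (-(2*c)) x := by
      have h0 := ((hasDerivAt_id' x).const_mul (2*c)).neg
      rw [mul_one] at h0
      exact h0
    have := (Real.hasDerivAt_exp (-(2*c*x))).comp x h1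
    have h2 := this.neg
    have h3 : HasDerivAt (fun σ : ℝ => -Real.exp (-(2*c*σ)))
        (-(Real.exp (-(2*c*x)) * -(2*c))) x := h2
    convert h3 using 1
    ring
  have hbeta_int : ∀ u v : ℝ, (∫ σ in u..v, 2*c*Real.exp (-(2*c*σ)))
      = Real.exp (-(2*c*u)) - Real.exp (-(2*c*v)) := by
    intro u v
    have h2 := intervalIntegral.integral_eq_sub_of_hasDerivAt (fun x _ => hexp x)
      ((continuous_const.mul hβc).intervalIntegrable u v)
    rw [h2]; simp; ring
  set J := ∫ τ in a..b, Real.exp (-(2*c*τ)) * (θ τ * k τ) with hJdef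
  set W := ∫ σ in a..b, Real.exp (-(2*c*σ)) * θ σ ^ 2 with hWdef
  set Q := ∫ σ in a..b, Real.exp (-(2*c*σ)) with hQdef
  have hFT := fubini_triangle' hab (f := fun τ => θ τ * k τ)
    (g := fun σ => 2*c*Real.exp (-(2*c*σ))) hθk
    ((continuous_const.mul hβc).intervalIntegrable a b)
  beta_reduce at hFT
  have hL : (∫ τ in a..b, (∫ σ in a..τ, 2*c*Real.exp (-(2*c*σ))) * (θ τ * k τ))
      = Real.exp (-(2*c*a)) * ((θ b ^ 2 - θ a ^ 2)/2) - J := by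
    have e1 : (∫ τ in a..b, (∫ σ in a..τ, 2*c*Real.exp (-(2*c*σ))) * (θ τ * k τ))
        = ∫ τ in a..b, (Real.exp (-(2*c*a)) * (θ τ * k τ)
            - Real.exp (-(2*c*τ)) * (θ τ * k τ)) := by
      apply intervalIntegral.integral_congr
      intro τ _
      beta_reduce
      rw [hbeta_int a τ]; ring
    rw [e1, intervalIntegral.integral_sub (hθk.const_mul _) hβθk,
      intervalIntegral.integral_const_mul, primitive_sq k hk A s hab]
  have hR : (∫ σ in a..b, (∫ τ in σ..b, θ τ * k τ) * (2*c*Real.exp (-(2*c*σ))))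
      = c * θ b ^ 2 * Q - c * W := by
    have e1 : (∫ σ in a..b, (∫ τ in σ..b, θ τ * k τ) * (2*c*Real.exp (-(2*c*σ))))
        = ∫ σ in a..b, (c * θ b ^ 2 * Real.exp (-(2*c*σ))
            - c * (Real.exp (-(2*c*σ)) * θ σ ^ 2)) := by
      apply intervalIntegral.integral_congr
      intro σ hσ
      rw [Set.uIcc_of_le hab] at hσ
      beta_reduce
      rw [primitive_sq k hk A s hσ.2]
      ring
    rw [e1, intervalIntegral.integral_sub
        ((hβc.intervalIntegrable a b).const_mul _)
        ((show IntervalIntegrable (fun σ => Real.exp (-(2*c*σ)) * θ σ ^ 2) volume a b from (hβc.mul (hθc.pow 2)).intervalIntegrable a b).const_mul c),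
      intervalIntegral.integral_const_mul, intervalIntegral.integral_const_mul]
  have hQ3 : 2*c*Q = Real.exp (-(2*c*a)) - Real.exp (-(2*c*b)) := by
    rw [hQdef, ← intervalIntegral.integral_const_mul]
    exact hbeta_int a b
  rw [hL, hR] at hFT
  have hgoal : (∫ τ in a..b, (2 * Real.exp (-(2*c*τ)) * θ τ * k τ
      - 2 * c * Real.exp (-(2*c*τ)) * θ τ ^ 2)) = 2 * J - 2 * c * W := by
    have e1 : (∫ τ in a..b, (2 * Real.exp (-(2*c*τ)) * θ τ * k τ
        - 2 * c * Real.exp (-(2*c*τ)) * θ τ ^ 2))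
        = ∫ τ in a..b, (2 * (Real.exp (-(2*c*τ)) * (θ τ * k τ))
            - 2 * c * (Real.exp (-(2*c*τ)) * θ τ ^ 2)) := by
      apply intervalIntegral.integral_congr
      intro τ _; beta_reduce; ring
    rw [e1, intervalIntegral.integral_sub (hβθk.const_mul 2)
        ((show IntervalIntegrable (fun σ => Real.exp (-(2*c*σ)) * θ σ ^ 2) volume a b from (hβc.mul (hθc.pow 2)).intervalIntegrable a b).const_mul (2*c)),
      intervalIntegral.integral_const_mul, intervalIntegral.integral_const_mul]
  rw [hgoal]
  linear_combination 2 * hFT + θ b ^ 2 * hQ3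

private lemma key_est (c : ℝ) (hc : 0 < c) (G h : ℝ → ℝ)
    (hG_cont : Continuous G) (hG_nonneg : ∀ t, 0 ≤ G t)
    (hh_nonneg : ∀ t, 0 ≤ h t)
    (hh_int : ∀ a b, IntervalIntegrable h volume a b)
    (hineq : ∀ s t : ℝ, s ≤ t →
      G t ≤ G s + ∫ τ in s..t, (2 * Real.sqrt (G τ) * h τ - 2 * c * G τ))
    (s t : ℝ) (hst : s ≤ t) (ε δ : ℝ) (hε : 0 < ε) (hδ : 0 < δ) :
    Real.exp (c*t) * Real.sqrt (G t)
      ≤ Real.exp (c*s) * Real.sqrt (G s + ε) + ∫ τ in s..t, Real.exp (c*τ) * (h τ + δ) := by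
  have hexpc : Continuous (fun τ : ℝ => Real.exp (c*τ)) :=
    Real.continuous_exp.comp (continuous_const.mul continuous_id)
  set k : ℝ → ℝ := fun τ => Real.exp (c*τ) * (h τ + δ) with hkdef
  have hk : ∀ a b : ℝ, IntervalIntegrable k volume a b := fun a b =>
    ((hh_int a b).add (intervalIntegrable_const)).continuousOn_mul hexpc.continuousOn
  set A := Real.exp (c*s) * Real.sqrt (G s + ε) with hAdef
  have hGsε : 0 < G s + ε := by linarith [hG_nonneg s]
  have hA : 0 < A := mul_pos (Real.exp_pos _) (Real.sqrt_pos.mpr hGsε)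
  set θ : ℝ → ℝ := fun τ => A + ∫ x in s..τ, k x with hθdef
  have hfold : ∀ τ, A + (∫ x in s..τ, k x) = θ τ := fun τ => rfl
  have hθc : Continuous θ := continuous_const.add (intervalIntegral.continuous_primitive hk s)
  have hθA : ∀ τ, s ≤ τ → A ≤ θ τ := by
    intro τ hτ
    have : 0 ≤ ∫ x in s..τ, k x := by
      apply intervalIntegral.integral_nonneg hτ
      intro u _
      have := hh_nonneg u
      positivity
    simp only [hθdef]; linarith
  set Φ : ℝ → ℝ := fun τ => Real.exp (-(c*τ)) * θ τ with hΦdef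
  have hΦc : Continuous Φ :=
    (Real.continuous_exp.comp ((continuous_const.mul continuous_id).neg)).mul hθc
  have hexp2 : ∀ τ : ℝ, Real.exp (-(c*τ)) ^ 2 = Real.exp (-(2*c*τ)) := by
    intro τ; rw [sq, ← Real.exp_add]; congr 1; ring
  have hΦsq : ∀ τ : ℝ, Φ τ ^ 2 = Real.exp (-(2*c*τ)) * θ τ ^ 2 := by
    intro τ; simp only [hΦdef]; rw [mul_pow, hexp2]
  have hΦs : G s < Φ s ^ 2 := by
    have h1 : Φ s = Real.sqrt (G s + ε) := by
      simp only [hΦdef, hθdef, intervalIntegral.integral_same, add_zero, hAdef,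
        ← mul_assoc, ← Real.exp_add]
      simp
    rw [h1, Real.sq_sqrt hGsε.le]
    linarith
  have main : ∀ τ ∈ Set.Icc s t, G τ < Φ τ ^ 2 := by
    by_contra hcon
    push_neg at hcon
    obtain ⟨τ₀, hτ₀, hτ₀'⟩ := hcon
    set S : Set ℝ := Set.Icc s t ∩ {τ | Φ τ ^ 2 ≤ G τ} with hSdef
    have hSclosed : IsClosed S := isClosed_Icc.inter (isClosed_le (hΦc.pow 2) hG_cont)
    have hSne : S.Nonempty := ⟨τ₀, hτ₀, hτ₀'⟩
    have hSbdd : BddBelow S := ⟨s, fun x hx => hx.1.1⟩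
    set r := sInf S with hrdef
    have hrS : r ∈ S := hSclosed.csInf_mem hSne hSbdd
    have hrmem : r ∈ Set.Icc s t := hrS.1
    have hrG : Φ r ^ 2 ≤ G r := hrS.2
    have hlow : ∀ τ, τ ∈ Set.Icc s r → τ ≠ r → G τ < Φ τ ^ 2 := by
      intro τ hτ hne
      by_contra hge; push_neg at hge
      have hτS : τ ∈ S := ⟨⟨hτ.1, hτ.2.trans hrmem.2⟩, hge⟩
      exact hne (le_antisymm hτ.2 (csInf_le hSbdd hτS))
    have hsr : s < r := by
      rcases eq_or_lt_of_le hrmem.1 with he | hlt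
      · exfalso; rw [← he] at hrG; linarith
      · exact hlt
    have hGr : G r = Φ r ^ 2 := by
      refine le_antisymm ?_ hrG
      have hcl : r ∈ closure (Set.Ico s r) := by
        rw [closure_Ico hsr.ne]; exact ⟨hsr.le, le_refl r⟩
      have hne : (nhdsWithin r (Set.Ico s r)).NeBot := mem_closure_iff_nhdsWithin_neBot.mp hcl
      have htend : Filter.Tendsto (fun τ => Φ τ ^ 2 - G τ) (nhdsWithin r (Set.Ico s r))
          (nhds (Φ r ^ 2 - G r)) := ((hΦc.pow 2).sub hG_cont).continuousAt.continuousWithinAt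
      have hnn : ∀ᶠ τ in nhdsWithin r (Set.Ico s r), 0 ≤ Φ τ ^ 2 - G τ :=
        eventually_nhdsWithin_of_forall (fun τ hτ => by
          have := hlow τ ⟨hτ.1, hτ.2.le⟩ (ne_of_lt hτ.2); linarith)
      have := ge_of_tendsto htend hnn
      linarith
    set ρ := Real.exp (-(c*r)) * A with hρdef
    have hρpos : 0 < ρ := mul_pos (Real.exp_pos _) hA
    have hΦlb : ∀ τ ∈ Set.Icc s r, ρ ≤ Φ τ := by
      intro τ hτ
      have h1 : Real.exp (-(c*r)) ≤ Real.exp (-(c*τ)) := by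
        apply Real.exp_le_exp.mpr
        nlinarith [hτ.2]
      have h2 : A ≤ θ τ := hθA τ hτ.1
      calc ρ = Real.exp (-(c*r)) * A := rfl
        _ ≤ Real.exp (-(c*τ)) * A := mul_le_mul_of_nonneg_right h1 hA.le
        _ ≤ Real.exp (-(c*τ)) * θ τ := mul_le_mul_of_nonneg_left h2 (Real.exp_pos _).le
    set η := δ * ρ / c with hηdef
    have hηpos : 0 < η := by positivity
    have hwcont : Filter.Tendsto (fun τ => Φ τ ^ 2 - G τ) (nhds r) (nhds (Φ r ^ 2 - G r)) :=
      ((hΦc.pow 2).sub hG_cont).continuousAt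
    have hev : ∀ᶠ τ in nhds r, Φ τ ^ 2 - G τ < η :=
      hwcont.eventually_lt_const (by rw [hGr]; simpa using hηpos)
    obtain ⟨d, hd, hball⟩ := Metric.eventually_nhds_iff.mp hev
    set s' := max s (r - d/2) with hs'def
    have hs'r : s' < r := max_lt hsr (by linarith)
    have hs's : s ≤ s' := le_max_left _ _
    have hs'close : ∀ τ ∈ Set.Icc s' r, Φ τ ^ 2 - G τ < η := by
      intro τ hτ
      apply hball
      rw [Real.dist_eq, abs_of_nonpos (by linarith [hτ.2])]
      have h1 := le_max_right s (r - d/2)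
      have h2 := hτ.1
      simp only [hs'def] at h2
      linarith [le_trans h1 h2]
    have hsqrtc : Continuous (fun τ => 2 * Real.sqrt (G τ)) :=
      continuous_const.mul (Real.continuous_sqrt.comp hG_cont)
    have hintA : IntervalIntegrable (fun τ => 2 * Real.sqrt (G τ) * h τ - 2 * c * G τ)
        volume s' r := by
      apply IntervalIntegrable.sub
      · exact (hh_int s' r).continuousOn_mul hsqrtc.continuousOn
      · exact (continuous_const.mul hG_cont).intervalIntegrable s' r
    have hintB : IntervalIntegrable (fun τ => 2 * Φ τ * (h τ + δ) - 2 * c * Φ τ ^ 2)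
        volume s' r := by
      apply IntervalIntegrable.sub
      · exact ((hh_int s' r).add intervalIntegrable_const).continuousOn_mul
          (continuous_const.mul hΦc).continuousOn
      · exact (continuous_const.mul (hΦc.pow 2)).intervalIntegrable s' r
    have hmono : (∫ τ in s'..r, (2 * Real.sqrt (G τ) * h τ - 2 * c * G τ))
        ≤ ∫ τ in s'..r, (2 * Φ τ * (h τ + δ) - 2 * c * Φ τ ^ 2) := by
      apply intervalIntegral.integral_mono_on hs'r.le hintA hintB
      intro τ hτ
      have hτs : τ ∈ Set.Icc s r := ⟨hs's.trans hτ.1, hτ.2⟩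
      have h1 : G τ ≤ Φ τ ^ 2 := by
        rcases eq_or_ne τ r with he | hne
        · rw [he, hGr]
        · exact (hlow τ hτs hne).le
      have h3 : ρ ≤ Φ τ := hΦlb τ hτs
      have h2 : Real.sqrt (G τ) ≤ Φ τ := by
        have hh := Real.sqrt_le_sqrt h1
        rwa [Real.sqrt_sq (le_trans hρpos.le h3)] at hh
      have h4 : Φ τ ^ 2 - G τ < η := hs'close τ hτ
      have h5 : 0 ≤ h τ := hh_nonneg τ
      have h6 : c * (Φ τ ^ 2 - G τ) ≤ δ * ρ := by
        have : c * (Φ τ ^ 2 - G τ) < c * η := by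
          apply mul_lt_mul_of_pos_left h4 hc
        have hcη : c * η = δ * ρ := by
          rw [hηdef]; field_simp
        linarith
      nlinarith [mul_le_mul_of_nonneg_right h2 h5]
    have hID := weighted_primitive_sq k hk c A s hs'r.le
    simp only [hfold] at hID
    have hID' : Φ r ^ 2 - Φ s' ^ 2
        = ∫ τ in s'..r, (2 * Φ τ * (h τ + δ) - 2 * c * Φ τ ^ 2) := by
      have e1 : (∫ τ in s'..r, (2 * Φ τ * (h τ + δ) - 2 * c * Φ τ ^ 2))
          = ∫ τ in s'..r, (2 * Real.exp (-(2*c*τ)) * θ τ * k τ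
              - 2 * c * Real.exp (-(2*c*τ)) * θ τ ^ 2) := by
        apply intervalIntegral.integral_congr
        intro τ _
        beta_reduce
        rw [hΦsq τ]
        simp only [hΦdef, hkdef]
        rw [show Real.exp (-(2*c*τ)) = Real.exp (-(c*τ)) * Real.exp (-(c*τ)) by
          rw [← Real.exp_add]; congr 1; ring]
        rw [show Real.exp (c*τ) = (Real.exp (-(c*τ)))⁻¹ by
          rw [← Real.exp_neg]; congr 1; ring]
        have hne := (Real.exp_pos (-(c*τ))).ne'
        field_simp
      rw [e1, ← hID, hΦsq r, hΦsq s']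
    have hIq := hineq s' r hs'r.le
    have hlow' : G s' < Φ s' ^ 2 := hlow s' ⟨hs's, hs'r.le⟩ hs'r.ne
    rw [hGr] at hIq
    linarith [hmono, hID']
  have hGt : G t < Φ t ^ 2 := main t ⟨hst, le_refl t⟩
  have h2 : Real.sqrt (G t) ≤ Φ t := by
    have hh := Real.sqrt_le_sqrt hGt.le
    have hΦt : 0 ≤ Φ t :=
      le_trans (mul_pos (Real.exp_pos _) hA).le
        (mul_le_mul_of_nonneg_left (hθA t hst) (Real.exp_pos _).le)
    rwa [Real.sqrt_sq hΦt] at hh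
  calc Real.exp (c*t) * Real.sqrt (G t) ≤ Real.exp (c*t) * Φ t :=
        mul_le_mul_of_nonneg_left h2 (Real.exp_pos _).le
    _ = θ t := by
        simp only [hΦdef, ← mul_assoc, ← Real.exp_add]
        simp
    _ = Real.exp (c*s) * Real.sqrt (G s + ε) + ∫ τ in s..t, Real.exp (c*τ) * (h τ + δ) := rfl

private lemma periodic_intervalIntegrable {h : ℝ → ℝ} {T : ℝ} (hT : 0 < T)
    (hper : ∀ t, h (t + T) = h t) (hint : IntervalIntegrable h volume 0 T) :
    ∀ a b : ℝ, IntervalIntegrable h volume a b := by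
  have hper' : Function.Periodic h T := hper
  have B : ∀ k : ℤ, IntervalIntegrable h volume (k*T) (k*T + T) := by
    intro k
    have h1 := hint.comp_add_right (-(k*T))
    have h2 : (fun x => h (x + -(k*T))) = h := by
      funext x
      have := (hper'.int_mul k) (x + -(k*T))
      rw [← this]
      congr 1
      ring
    rw [h2] at h1
    have e1 : (0:ℝ) - -(↑k*T) = ↑k*T := by ring
    have e2 : T - -(↑k*T) = ↑k*T + T := by ring
    rwa [e1, e2] at h1
  have C : ∀ n : ℕ, IntervalIntegrable h volume (-(n*T)) (n*T) := by
    intro n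
    induction n with
    | zero => simp
    | succ n ih =>
      have hL := B (-(n+1) : ℤ)
      have hR := B (n : ℤ)
      have e2 : ((-(n+1) : ℤ) : ℝ) * T + T = -((n:ℝ) * T) := by push_cast; ring
      have e1 : ((-(n+1) : ℤ) : ℝ) * T = -((n:ℝ)+1) * T := by push_cast; ring
      rw [e2, e1] at hL
      have e4 : ((n : ℤ) : ℝ) * T + T = ((n:ℝ)+1) * T := by push_cast; ring
      have e3 : ((n : ℤ) : ℝ) * T = (n:ℝ) * T := by push_cast; ring
      rw [e4, e3] at hR
      rw [show -((((n+1:ℕ)):ℝ) * T) = -(((n:ℝ)+1)*T) by push_cast; ring,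
        show (((n+1:ℕ)):ℝ) * T = ((n:ℝ)+1) * T by push_cast; ring]
      have hL' : IntervalIntegrable h volume (-(((n:ℝ)+1)*T)) (-((n:ℝ)*T)) := by
        rwa [show -(((n:ℝ)+1)*T) = -((n:ℝ)+1) * T by ring]
      exact (hL'.trans ih).trans hR
  intro a b
  obtain ⟨n, hn⟩ := exists_nat_gt (max |a| |b| / T)
  have hn' : max |a| |b| < n * T := by
    rw [div_lt_iff₀ hT] at hn
    linarith
  have hnT : (0:ℝ) ≤ (n:ℝ)*T := mul_nonneg (Nat.cast_nonneg n) hT.le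
  have hmem : ∀ x : ℝ, |x| ≤ max |a| |b| → x ∈ Set.uIcc (-((n:ℝ)*T)) ((n:ℝ)*T) := by
    intro x hx
    rw [Set.uIcc_of_le (by linarith : -((n:ℝ)*T) ≤ (n:ℝ)*T)]
    constructor
    · linarith [neg_abs_le x, le_trans hx hn'.le]
    · linarith [le_abs_self x, le_trans hx hn'.le]
  exact (C n).mono_set (Set.uIcc_subset_uIcc
    (hmem a (le_max_left _ _)) (hmem b (le_max_right _ _)))

private lemma key_est' (c : ℝ) (hc : 0 < c) (G h : ℝ → ℝ)
    (hG_cont : Continuous G) (hG_nonneg : ∀ t, 0 ≤ G t)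
    (hh_nonneg : ∀ t, 0 ≤ h t)
    (hh_int : ∀ a b, IntervalIntegrable h volume a b)
    (hineq : ∀ s t : ℝ, s ≤ t →
      G t ≤ G s + ∫ τ in s..t, (2 * Real.sqrt (G τ) * h τ - 2 * c * G τ))
    (s t : ℝ) (hst : s ≤ t) :
    Real.exp (c*t) * Real.sqrt (G t)
      ≤ Real.exp (c*s) * Real.sqrt (G s) + ∫ τ in s..t, Real.exp (c*τ) * h τ := by
  apply le_of_forall_pos_le_add
  intro η hη
  have hexpc : Continuous (fun τ : ℝ => Real.exp (c*τ)) :=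
    Real.continuous_exp.comp (continuous_const.mul continuous_id)
  set C := ∫ τ in s..t, Real.exp (c*τ) with hCdef
  have hC0 : 0 ≤ C := intervalIntegral.integral_nonneg hst (fun u _ => (Real.exp_pos _).le)
  set E := Real.exp (c*s) with hEdef
  have hE : 0 < E := Real.exp_pos _
  set δ := η / (2*(C+1)) with hδdef
  have hδ : 0 < δ := by positivity
  set u := η / (2*(E+1)) with hudef
  have hu : 0 < u := by positivity
  set ε := u^2 with hεdef
  have hε : 0 < ε := by positivity
  have hkey := key_est c hc G h hG_cont hG_nonneg hh_nonneg hh_int hineq s t hst ε δ hε hδ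
  have hsqε : Real.sqrt ε = u := by rw [hεdef, Real.sqrt_sq hu.le]
  have hsqrt : Real.sqrt (G s + ε) ≤ Real.sqrt (G s) + u := by
    have h1 : G s + ε ≤ (Real.sqrt (G s) + Real.sqrt ε)^2 := by
      have e1 := Real.sq_sqrt (hG_nonneg s)
      have e2 := Real.sq_sqrt hε.le
      nlinarith [Real.sqrt_nonneg (G s), Real.sqrt_nonneg ε]
    have h2 := Real.sqrt_le_sqrt h1
    rwa [Real.sqrt_sq (by positivity), hsqε] at h2
  have hsplit : (∫ τ in s..t, Real.exp (c*τ) * (h τ + δ))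
      = (∫ τ in s..t, Real.exp (c*τ) * h τ) + δ * C := by
    have e1 : (∫ τ in s..t, Real.exp (c*τ) * (h τ + δ))
        = ∫ τ in s..t, (Real.exp (c*τ) * h τ + δ * Real.exp (c*τ)) := by
      apply intervalIntegral.integral_congr
      intro τ _; beta_reduce; ring
    rw [e1, intervalIntegral.integral_add
        ((hh_int s t).continuousOn_mul hexpc.continuousOn)
        ((hexpc.intervalIntegrable s t).const_mul δ),
      intervalIntegral.integral_const_mul]
  have hb1 : E * u ≤ η / 2 := by
    have h7 : u * (2*(E+1)) = η := div_mul_cancel₀ η (by positivity)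
    nlinarith
  have hb2 : δ * C ≤ η / 2 := by
    have h7 : δ * (2*(C+1)) = η := div_mul_cancel₀ η (by positivity)
    nlinarith
  calc Real.exp (c*t) * Real.sqrt (G t)
      ≤ E * Real.sqrt (G s + ε) + ∫ τ in s..t, Real.exp (c*τ) * (h τ + δ) := hkey
    _ ≤ E * (Real.sqrt (G s) + u) + ((∫ τ in s..t, Real.exp (c*τ) * h τ) + δ * C) := by
        rw [hsplit]
        have := mul_le_mul_of_nonneg_left hsqrt hE.le
        linarith
    _ ≤ E * Real.sqrt (G s) + (∫ τ in s..t, Real.exp (c*τ) * h τ) + η := by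
        have : E * (Real.sqrt (G s) + u) = E * Real.sqrt (G s) + E * u := by ring
        linarith

theorem periodic_gronwall_sqrt_bound
    (T c : ℝ) (hT : 0 < T) (hc : 0 < c)
    (G h : ℝ → ℝ)
    (hG_cont : Continuous G) (hG_nonneg : ∀ t, 0 ≤ G t)
    (hG_per : ∀ t, G (t + T) = G t)
    (hh_nonneg : ∀ t, 0 ≤ h t) (hh_per : ∀ t, h (t + T) = h t)
    (hh_int : IntervalIntegrable h volume 0 T)
    (hineq : ∀ s t : ℝ, s ≤ t →
      G t ≤ G s + ∫ τ in s..t, (2 * Real.sqrt (G τ) * h τ - 2 * c * G τ)) :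
    ∀ t, Real.sqrt (G t) ≤ (1 + 1 / (c * T)) * ∫ τ in (0:ℝ)..T, h τ := by
  intro t
  set H := ∫ τ in (0:ℝ)..T, h τ with hHdef
  have hH0 : 0 ≤ H := intervalIntegral.integral_nonneg hT.le (fun u _ => hh_nonneg u)
  have hint := periodic_intervalIntegrable hT hh_per hh_int
  have hexpc : Continuous (fun τ : ℝ => Real.exp (c*τ)) :=
    Real.continuous_exp.comp (continuous_const.mul continuous_id)
  have hkey := key_est' c hc G h hG_cont hG_nonneg hh_nonneg hint hineq t (t+T)
    (by linarith)
  have hGper : Real.sqrt (G (t+T)) = Real.sqrt (G t) := by rw [hG_per]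
  rw [hGper] at hkey
  set u := Real.sqrt (G t) with hudef
  have hu0 : 0 ≤ u := Real.sqrt_nonneg _
  have hbound : (∫ τ in t..(t+T), Real.exp (c*τ) * h τ) ≤ Real.exp (c*(t+T)) * H := by
    have h1 : (∫ τ in t..(t+T), Real.exp (c*τ) * h τ)
        ≤ ∫ τ in t..(t+T), Real.exp (c*(t+T)) * h τ := by
      apply intervalIntegral.integral_mono_on (by linarith)
        ((hint t _).continuousOn_mul hexpc.continuousOn)
        ((hint t _).const_mul _)
      intro τ hτ
      apply mul_le_mul_of_nonneg_right _ (hh_nonneg τ)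
      exact Real.exp_le_exp.mpr (by nlinarith [hτ.2])
    have h2 : (∫ τ in t..(t+T), h τ) = H := by
      have := (show Function.Periodic h T from hh_per).intervalIntegral_add_eq t 0
      simpa using this
    rw [intervalIntegral.integral_const_mul, h2] at h1
    exact h1
  have hEt : Real.exp (c*(t+T)) = Real.exp (c*t) * Real.exp (c*T) := by
    rw [← Real.exp_add]; congr 1; ring
  rw [hEt] at hkey hbound
  have hpos : 0 < Real.exp (c*t) := Real.exp_pos _
  set E := Real.exp (c*T) with hEdef
  have hkey3 : E * u ≤ u + E * H := by
    have h3 : Real.exp (c*t) * (E * u) ≤ Real.exp (c*t) * (u + E * H) := by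
      nlinarith [hkey, hbound]
    exact le_of_mul_le_mul_left h3 hpos
  have hcT : 0 < c * T := mul_pos hc hT
  have hE1 : c*T + 1 ≤ E := Real.add_one_le_exp (c*T)
  have hE1pos : 0 < E - 1 := by linarith
  have h4 : u * (E - 1) ≤ E * H := by nlinarith [hkey3]
  have h5 : u ≤ E * H / (E - 1) := (le_div_iff₀ hE1pos).mpr h4
  have h6 : E * H / (E - 1) = H + H / (E - 1) := by
    field_simp
    ring
  have h7 : H / (E - 1) ≤ H / (c*T) := by
    apply div_le_div_of_nonneg_left hH0 hcT  -- check arg order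
    linarith
  have h8 : (1 + 1 / (c*T)) * H = H + H / (c*T) := by ring
  rw [h8]
  linarith [h5, h6 ▸ h5]
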